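/- Let H be a separable Hilbert space and let P : ℝ^d → B(H) be a continuous (in operator norm) family of orthogonal projectors that is periodic with respect to a lattice Λ ≅ ℤ^d, and such that each P(k) has finite rank. Then the set K = { φ ∈ H : ‖φ‖ = 1 and P(k)φ = φ for some k ∈ ℝ^d } is compact in H. -/

import Mathlib

theorem stmt_0 {d : ℕ} {H : Type*} [NormedAddCommGroup H] [InnerProductSpace ℂ H]
    [CompleteSpace H] [TopologicalSpace.SeparableSpace H]
    (P : (Fin d → ℝ) → H →L[ℂ] H)
    (hcont : Continuous P)
    (hidem : ∀ k, IsIdempotentElem (P k))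
    (hsa : ∀ k, IsSelfAdjoint (P k))
    (hfin : ∀ k, FiniteDimensional ℂ (LinearMap.range (P k : H →ₗ[ℂ] H)))
    (hper : ∀ (k : Fin d → ℝ) (γ : Fin d → ℤ), P (k + fun i => (γ i : ℝ)) = P k) :
    IsCompact {φ : H | ‖φ‖ = 1 ∧ ∃ k, P k φ = φ} := by
  rw [isCompact_iff_isSeqCompact]
  intro x hx
  have hx1 : ∀ n, ‖x n‖ = 1 := fun n => (hx n).1
  choose k hk using fun n => (hx n).2
  set k' : ℕ → Fin d → ℝ := fun n i => Int.fract (k n i) with hk'def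
  have hk'fix : ∀ n, P (k' n) (x n) = x n := by
    intro n
    have h1 : P (k' n + fun i => ((⌊k n i⌋ : ℤ) : ℝ)) = P (k' n) :=
      hper (k' n) (fun i => ⌊k n i⌋)
    have h2 : (k' n + fun i => ((⌊k n i⌋ : ℤ) : ℝ)) = k n := by
      funext i
      simp only [hk'def, Pi.add_apply, Int.fract]
      ring
    rw [← h1, h2]
    exact hk n
  have hk'mem : ∀ n, k' n ∈ Set.Icc (0 : Fin d → ℝ) 1 := by
    intro n
    constructor
    · intro i; exact Int.fract_nonneg _
    · intro i; exact (Int.fract_lt_one _).le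
  obtain ⟨k₀, _, σ, hσ, hkσ⟩ := isCompact_Icc.tendsto_subseq hk'mem
  set y : ℕ → H := fun n => x (σ n) with hydef
  set z : ℕ → H := fun n => P k₀ (y n) with hzdef
  -- the difference y - z tends to 0
  have hPconv : Filter.Tendsto (fun n => P (k' (σ n))) Filter.atTop (nhds (P k₀)) :=
    (hcont.tendsto k₀).comp hkσ
  have hnorm0 : Filter.Tendsto (fun n => ‖P (k' (σ n)) - P k₀‖) Filter.atTop (nhds 0) := by
    rw [← tendsto_iff_norm_sub_tendsto_zero] at *
    exact hPconv
  have hdiff : Filter.Tendsto (fun n => y n - z n) Filter.atTop (nhds 0) := by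
    rw [tendsto_zero_iff_norm_tendsto_zero]
    apply squeeze_zero (fun n => norm_nonneg _) _ hnorm0
    intro n
    have : y n - z n = (P (k' (σ n)) - P k₀) (y n) := by
      simp [hzdef, hydef, hk'fix (σ n)]
    rw [this]
    calc ‖(P (k' (σ n)) - P k₀) (y n)‖ ≤ ‖P (k' (σ n)) - P k₀‖ * ‖y n‖ :=
          ContinuousLinearMap.le_opNorm _ _
      _ = ‖P (k' (σ n)) - P k₀‖ := by rw [hx1 (σ n)]; ring
  -- z lives in a compact set: ball of the finite-dimensional range of P k₀
  haveI := hfin k₀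
  set E : Submodule ℂ H := LinearMap.range (P k₀ : H →ₗ[ℂ] H) with hEdef
  haveI : FiniteDimensional ℂ E := hfin k₀
  have hScompact : IsCompact ((↑) '' (Metric.closedBall (0 : E) ‖P k₀‖) : Set H) :=
    (isCompact_closedBall (0 : E) ‖P k₀‖).image continuous_subtype_val
  have hzmem : ∀ n, z n ∈ ((↑) '' (Metric.closedBall (0 : E) ‖P k₀‖) : Set H) := by
    intro n
    refine ⟨⟨z n, ⟨y n, rfl⟩⟩, ?_, rfl⟩
    rw [Metric.mem_closedBall, dist_zero_right]
    show ‖z n‖ ≤ ‖P k₀‖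
    calc ‖z n‖ ≤ ‖P k₀‖ * ‖y n‖ := ContinuousLinearMap.le_opNorm _ _
      _ = ‖P k₀‖ := by rw [hx1 (σ n)]; ring
  obtain ⟨ψ, hψmem, τ, hτ, hzτ⟩ := hScompact.tendsto_subseq hzmem
  -- y ∘ τ tends to ψ
  have hyτ : Filter.Tendsto (fun n => y (τ n)) Filter.atTop (nhds ψ) := by
    have h1 : Filter.Tendsto (fun n => y (τ n) - z (τ n)) Filter.atTop (nhds 0) :=
      hdiff.comp hτ.tendsto_atTop
    have h2 := hzτ.add h1
    simp only [add_zero] at h2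
    convert h2 using 2 with n
    simp [Function.comp]
  refine ⟨ψ, ⟨?_, k₀, ?_⟩, σ ∘ τ, hσ.comp hτ, hyτ⟩
  · have h1 : Filter.Tendsto (fun n => ‖y (τ n)‖) Filter.atTop (nhds ‖ψ‖) :=
      hyτ.norm
    have h2 : Filter.Tendsto (fun n => ‖y (τ n)‖) Filter.atTop (nhds 1) := by
      simpa [hydef, hx1] using tendsto_const_nhds (X := ℝ) (f := Filter.atTop (α := ℕ)) (x := 1)
    exact tendsto_nhds_unique h1 h2
  · obtain ⟨⟨w, ⟨u, hu⟩⟩, _, hw⟩ := hψmem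
    have : ψ = P k₀ u := by rw [← hw]; exact hu.symm
    rw [this, ← ContinuousLinearMap.mul_apply, hidem k₀]
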